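/- Let M be a matroid with rank function r on a finite ground set 𝒳 all of whose independent sets have cardinality at most q, and let ≻ be a strict linear order on 𝒳. There exists exactly one choice rule C on 𝒳 satisfying all of: (i) matroidal objectives: for every A ⊆ 𝒳 and every A′ ⊆ A, r(C(A)) ≥ r(A′); (ii) no justified envy under rank: for every A ⊆ 𝒳, x ∈ C(A), and y ∈ A \ C(A), if y ≻ x then r((C(A) \ {x}) ∪ {y}) < r(C(A)); (iii) non-wastefulness: |C(A)| = min(|A|, q) for every A ⊆ 𝒳. -/

import Mathlib

/-- A matroid on the finite ground set `α`, given by its independent sets. -/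
structure FinMatroid (α : Type*) [DecidableEq α] where
  Indep : Finset α → Prop
  indep_empty : Indep ∅
  indep_subset : ∀ ⦃A B : Finset α⦄, Indep B → A ⊆ B → Indep A
  indep_exchange : ∀ ⦃A B : Finset α⦄, Indep A → Indep B → A.card < B.card →
    ∃ x ∈ B, x ∉ A ∧ Indep (insert x A)

open Classical in
/-- The rank of a set: the common cardinality of its maximal independent
subsets. -/
noncomputable def FinMatroid.rank {α : Type*} [DecidableEq α]
    (M : FinMatroid α) (X : Finset α) : ℕ :=
  (X.powerset.filter fun A => M.Indep A).sup Finset.card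

/-- `Y` is a basis of `X`: a maximal independent subset of `X`. -/
def FinMatroid.IsBasisOf {α : Type*} [DecidableEq α]
    (M : FinMatroid α) (Y X : Finset α) : Prop :=
  Y ⊆ X ∧ M.Indep Y ∧ ∀ Z : Finset α, Z ⊆ X → M.Indep Z → Y ⊆ Z → Z = Y

namespace FinMatroid
variable {α : Type*} [DecidableEq α] (M : FinMatroid α)

open Classical in
lemma card_le_rank {B X : Finset α} (hBX : B ⊆ X) (hB : M.Indep B) :
    B.card ≤ M.rank X :=
  Finset.le_sup (by simp [Finset.mem_filter, Finset.mem_powerset, hBX, hB])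

open Classical in
lemma exists_basis (X : Finset α) : ∃ B, B ⊆ X ∧ M.Indep B ∧ B.card = M.rank X := by
  have hne : (X.powerset.filter fun A => M.Indep A).Nonempty :=
    ⟨∅, by simp [M.indep_empty]⟩
  obtain ⟨B, hB, hBcard⟩ := Finset.exists_mem_eq_sup _ hne Finset.card
  simp only [Finset.mem_filter, Finset.mem_powerset] at hB
  exact ⟨B, hB.1, hB.2, hBcard.symm⟩

open Classical in
lemma rank_le_card (X : Finset α) : M.rank X ≤ X.card := by
  apply Finset.sup_le
  intro B hB
  simp only [Finset.mem_filter, Finset.mem_powerset] at hB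
  exact Finset.card_le_card hB.1

open Classical in
lemma rank_mono {X Y : Finset α} (h : X ⊆ Y) : M.rank X ≤ M.rank Y := by
  apply Finset.sup_mono
  intro B hB
  simp only [Finset.mem_filter, Finset.mem_powerset] at hB ⊢
  exact ⟨hB.1.trans h, hB.2⟩

lemma rank_insert_le (x : α) (X : Finset α) :
    M.rank (insert x X) ≤ M.rank X + 1 := by
  obtain ⟨B, hBX, hBi, hBc⟩ := M.exists_basis (insert x X)
  have h1 : B.erase x ⊆ X := by
    intro b hb
    have := hBX (Finset.mem_of_mem_erase hb)
    rcases Finset.mem_insert.1 this with h | h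
    · exact absurd h (Finset.ne_of_mem_erase hb)
    · exact h
  have h2 : (B.erase x).card ≤ M.rank X :=
    M.card_le_rank h1 (M.indep_subset hBi (Finset.erase_subset _ _))
  have h3 : B.card ≤ (B.erase x).card + 1 := by
    calc B.card ≤ (insert x (B.erase x)).card :=
          Finset.card_le_card (fun b hb => by
            by_cases hbx : b = x
            · simp [hbx]
            · exact Finset.mem_insert_of_mem (Finset.mem_erase.2 ⟨hbx, hb⟩))
      _ ≤ (B.erase x).card + 1 := Finset.card_insert_le _ _
  omega

lemma rank_union_le (S T : Finset α) (h : ∀ x ∈ T, M.rank (insert x S) ≤ M.rank S) :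
    M.rank (S ∪ T) ≤ M.rank S := by
  obtain ⟨B, hBS, hBi, hBc⟩ := M.exists_basis S
  obtain ⟨B', hB'S, hB'i, hB'c⟩ := M.exists_basis (S ∪ T)
  by_contra hlt
  push_neg at hlt
  have hcard : B.card < B'.card := by omega
  obtain ⟨z, hzB', hzB, hzi⟩ := M.indep_exchange hBi hB'i hcard
  have hz : z ∈ S ∪ T := hB'S hzB'
  have hcard' : (insert z B).card = B.card + 1 := Finset.card_insert_of_notMem hzB
  rcases Finset.mem_union.1 hz with hzS | hzT
  · have := M.card_le_rank (Finset.insert_subset hzS hBS) hzi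
    omega
  · have h1 := M.card_le_rank (Finset.insert_subset_insert z hBS) hzi
    have h2 := h z hzT
    omega

lemma rank_union_le_card (S T : Finset α) : M.rank (S ∪ T) ≤ M.rank S + T.card := by
  induction T using Finset.induction_on with
  | empty => simpa using M.rank_mono (Finset.union_subset (Finset.Subset.refl S) (by simp))
  | @insert a T ha ih =>
    have : S ∪ insert a T = insert a (S ∪ T) := by
      ext b; simp [Finset.mem_union, Finset.mem_insert, or_left_comm, or_comm]
    rw [this, Finset.card_insert_of_notMem ha]
    calc M.rank (insert a (S ∪ T)) ≤ M.rank (S ∪ T) + 1 := M.rank_insert_le _ _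
      _ ≤ M.rank S + T.card + 1 := by omega

lemma rank_add_card_le {S T : Finset α} (h : S ⊆ T) :
    M.rank T + S.card ≤ M.rank S + T.card := by
  have h1 : M.rank (S ∪ (T \ S)) ≤ M.rank S + (T \ S).card := M.rank_union_le_card S _
  rw [Finset.union_sdiff_of_subset h] at h1
  have h2 : (T \ S).card + S.card = T.card := by
    have := Finset.card_le_card h
    rw [Finset.card_sdiff_of_subset h]
    omega
  omega

/-- Independence in the elongation to rank `k` of `M` restricted to `A`. -/
def NI (A : Finset α) (k : ℕ) (S : Finset α) : Prop :=
  S ⊆ A ∧ S.card ≤ k ∧ M.rank A + S.card ≤ M.rank S + k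

lemma NI_subset {A S T : Finset α} {k : ℕ} (hT : M.NI A k T) (hST : S ⊆ T) :
    M.NI A k S := by
  obtain ⟨h1, h2, h3⟩ := hT
  have h4 := M.rank_add_card_le hST
  have h5 := Finset.card_le_card hST
  exact ⟨hST.trans h1, h5.trans h2, by omega⟩

lemma NI_exchange {A S T : Finset α} {k : ℕ} (hS : M.NI A k S) (hT : M.NI A k T)
    (hc : S.card < T.card) : ∃ x ∈ T, x ∉ S ∧ M.NI A k (insert x S) := by
  obtain ⟨hSA, hSk, hSr⟩ := hS
  obtain ⟨hTA, hTk, hTr⟩ := hT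
  by_cases hslack : M.rank A + S.card < M.rank S + k
  · obtain ⟨x, hxT, hxS⟩ : ∃ x ∈ T, x ∉ S := by
      by_contra hcon
      push_neg at hcon
      exact absurd (Finset.card_le_card hcon) (by omega)
    refine ⟨x, hxT, hxS, Finset.insert_subset (hTA hxT) hSA, ?_, ?_⟩
    · rw [Finset.card_insert_of_notMem hxS]; omega
    · rw [Finset.card_insert_of_notMem hxS]
      have := M.rank_mono (Finset.subset_insert x S)
      omega
  · have hx : ∃ x ∈ T, M.rank S < M.rank (insert x S) := by
      by_contra hcon
      push_neg at hcon
      have h1 : M.rank (S ∪ T) ≤ M.rank S := M.rank_union_le S T hcon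
      have h2 : M.rank T ≤ M.rank S := (M.rank_mono Finset.subset_union_right).trans h1
      omega
    obtain ⟨x, hxT, hxr⟩ := hx
    have hxS : x ∉ S := fun hmem => by simp [Finset.insert_eq_self.2 hmem] at hxr
    refine ⟨x, hxT, hxS, Finset.insert_subset (hTA hxT) hSA, ?_, ?_⟩
    · rw [Finset.card_insert_of_notMem hxS]; omega
    · rw [Finset.card_insert_of_notMem hxS]; omega

lemma NI_extend {A B : Finset α} {k : ℕ} (hB : M.NI A k B) (hBc : B.card = k) :
    ∀ n : ℕ, ∀ I : Finset α, M.NI A k I → I.card + n = k →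
      ∃ J, M.NI A k J ∧ I ⊆ J ∧ J ⊆ I ∪ B ∧ J.card = k := by
  intro n
  induction n with
  | zero => exact fun I hI hIc => ⟨I, hI, Finset.Subset.refl I, Finset.subset_union_left, by omega⟩
  | succ n ih =>
    intro I hI hIc
    obtain ⟨x, hxB, hxI, hxNI⟩ := M.NI_exchange hI hB (by omega)
    obtain ⟨J, hJ, hIJ, hJsub, hJc⟩ := ih (insert x I) hxNI
      (by rw [Finset.card_insert_of_notMem hxI]; omega)
    refine ⟨J, hJ, (Finset.subset_insert x I).trans hIJ, ?_, hJc⟩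
    refine hJsub.trans ?_
    intro b hb
    rcases Finset.mem_union.1 hb with hb | hb
    · rcases Finset.mem_insert.1 hb with hb | hb
      · exact Finset.mem_union_right _ (hb ▸ hxB)
      · exact Finset.mem_union_left _ hb
    · exact Finset.mem_union_right _ hb

section Choice
variable {β : Type*} [Fintype β] [LinearOrder β] (N : FinMatroid β)

/-- The three axioms, for a fixed budget set `A`. -/
def Good (q : ℕ) (A C : Finset β) : Prop :=
  C ⊆ A ∧ (∀ A' : Finset β, A' ⊆ A → N.rank A' ≤ N.rank C) ∧
  (∀ x ∈ C, ∀ y ∈ A \ C, y > x → N.rank (insert y (C.erase x)) < N.rank C) ∧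
  C.card = min A.card q

/-- weight function -/
noncomputable def wt (x : β) : ℕ := (Finset.univ.filter (· < x)).card

lemma wt_lt {x y : β} (h : x < y) : wt x < wt y := by
  apply Finset.card_lt_card
  constructor
  · intro z hz
    simp only [Finset.mem_filter, Finset.mem_univ, true_and] at hz ⊢
    exact hz.trans h
  · intro hcon
    have := hcon (by simp [wt, h] : x ∈ Finset.univ.filter (· < y))
    simp at this

lemma rank_le_min {q : ℕ} (A : Finset β) (hq : ∀ B : Finset β, N.Indep B → B.card ≤ q) :
    N.rank A ≤ min A.card q := by
  obtain ⟨B, hBA, hBi, hBc⟩ := N.exists_basis A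
  exact le_min (N.rank_le_card A) (hBc ▸ hq B hBi)

lemma good_rank {q : ℕ} {A C : Finset β} (h : N.Good q A C) : N.rank C = N.rank A :=
  le_antisymm (N.rank_mono h.1) (h.2.1 A (Finset.Subset.refl A))

lemma exists_good (q : ℕ) (hq : ∀ B : Finset β, N.Indep B → B.card ≤ q) (A : Finset β) :
    ∃ C, N.Good q A C := by
  classical
  set k := min A.card q with hk
  have hrk : N.rank A ≤ k := N.rank_le_min A hq
  -- a spanning set of size k exists
  obtain ⟨B0, hB0A, hB0i, hB0c⟩ := N.exists_basis A
  obtain ⟨F, hFsub, hFc⟩ := Finset.exists_subset_card_eq (s := A \ B0) (n := k - B0.card)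
    (by
      have h1 := Finset.card_sdiff_of_subset hB0A
      have h2 : k ≤ A.card := min_le_left _ _
      have h3 : B0.card ≤ A.card := Finset.card_le_card hB0A
      omega)
  have hdisj : Disjoint B0 F := Finset.disjoint_left.2 fun a ha hf =>
    (Finset.mem_sdiff.1 (hFsub hf)).2 ha
  set S := A.powerset.filter (fun B => B.card = k ∧ N.rank B = N.rank A) with hS
  have hSne : S.Nonempty := by
    refine ⟨B0 ∪ F, ?_⟩
    simp only [hS, Finset.mem_filter, Finset.mem_powerset]
    refine ⟨Finset.union_subset hB0A (hFsub.trans (Finset.sdiff_subset)), ?_, ?_⟩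
    · rw [Finset.card_union_of_disjoint hdisj, hFc]
      omega
    · refine le_antisymm (N.rank_mono (Finset.union_subset hB0A
        (hFsub.trans (Finset.sdiff_subset)))) ?_
      have := N.card_le_rank (Finset.subset_union_left (s₁ := B0) (s₂ := F)) hB0i
      omega
  obtain ⟨C, hCS, hCmax⟩ := Finset.exists_max_image S (fun B => ∑ x ∈ B, wt x) hSne
  simp only [hS, Finset.mem_filter, Finset.mem_powerset] at hCS
  obtain ⟨hCA, hCc, hCr⟩ := hCS
  refine ⟨C, hCA, ?_, ?_, hCc⟩
  · intro A' hA'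
    rw [hCr]; exact N.rank_mono hA'
  · intro x hx y hy hyx
    rw [Finset.mem_sdiff] at hy
    by_contra hcon
    push_neg at hcon
    set C' := insert y (C.erase x) with hC'
    have hyC : y ∉ C.erase x := fun h => hy.2 (Finset.mem_of_mem_erase h)
    have hC'A : C' ⊆ A := Finset.insert_subset hy.1 ((Finset.erase_subset _ _).trans hCA)
    have hC'c : C'.card = k := by
      rw [hC', Finset.card_insert_of_notMem hyC, Finset.card_erase_of_mem hx]
      have : 0 < C.card := Finset.card_pos.2 ⟨x, hx⟩
      omega
    have hC'r : N.rank C' = N.rank A := by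
      refine le_antisymm (N.rank_mono hC'A) ?_
      rw [← hCr]; exact hcon
    have hmem : C' ∈ S := by
      simp only [hS, Finset.mem_filter, Finset.mem_powerset]
      exact ⟨hC'A, hC'c, hC'r⟩
    have hle := hCmax C' hmem
    have hsum1 : ∑ z ∈ C', wt z = wt y + ∑ z ∈ C.erase x, wt z :=
      Finset.sum_insert hyC
    have hsum2 : ∑ z ∈ C.erase x, wt z + wt x = ∑ z ∈ C, wt z :=
      Finset.sum_erase_add _ _ hx
    have := wt_lt hyx
    omega

lemma good_core {q : ℕ} {A C₁ C₂ : Finset β} (hq : ∀ B : Finset β, N.Indep B → B.card ≤ q)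
    (h1 : N.Good q A C₁) (h2 : N.Good q A C₂) {y : β} (hy2 : y ∈ C₂) (hy1 : y ∉ C₁)
    (hagree : ∀ z, y < z → (z ∈ C₁ ↔ z ∈ C₂)) : False := by
  classical
  set k := min A.card q with hk
  have hr1 : N.rank C₁ = N.rank A := N.good_rank h1
  have hr2 : N.rank C₂ = N.rank A := N.good_rank h2
  have hc1 : C₁.card = k := h1.2.2.2
  have hc2 : C₂.card = k := h2.2.2.2
  have hN1 : N.NI A k C₁ := ⟨h1.1, le_of_eq hc1, by omega⟩
  have hN2 : N.NI A k C₂ := ⟨h2.1, le_of_eq hc2, by omega⟩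
  set T := C₁.filter (y < ·) with hT
  have hTC2 : insert y T ⊆ C₂ := by
    intro z hz
    rcases Finset.mem_insert.1 hz with hz | hz
    · exact hz ▸ hy2
    · rw [hT, Finset.mem_filter] at hz
      exact (hagree z hz.2).1 hz.1
  have hNI0 : N.NI A k (insert y T) := N.NI_subset hN2 hTC2
  have hcardT : (insert y T).card ≤ k :=
    le_trans (Finset.card_le_card hTC2) (le_of_eq h2.2.2.2)
  obtain ⟨J, hJNI, hJ1, hJ2, hJc⟩ := N.NI_extend hN1 h1.2.2.2
    (k - (insert y T).card) (insert y T) hNI0 (by omega)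
  have hTsub : T ⊆ C₁ := Finset.filter_subset _ _
  have hJW : J ⊆ insert y C₁ := by
    refine hJ2.trans ?_
    intro b hb
    rcases Finset.mem_union.1 hb with hb | hb
    · rcases Finset.mem_insert.1 hb with hb | hb
      · exact hb ▸ Finset.mem_insert_self _ _
      · exact Finset.mem_insert_of_mem (hTsub hb)
    · exact Finset.mem_insert_of_mem hb
  have hWc : (insert y C₁).card = k + 1 := by
    rw [Finset.card_insert_of_notMem hy1, h1.2.2.2]
  have hsd : ((insert y C₁) \ J).card = 1 := by
    rw [Finset.card_sdiff_of_subset hJW]; omega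
  obtain ⟨x, hx⟩ := Finset.card_eq_one.1 hsd
  have hxW : x ∈ insert y C₁ := by
    have : x ∈ (insert y C₁) \ J := hx ▸ Finset.mem_singleton_self x
    exact (Finset.mem_sdiff.1 this).1
  have hxJ : x ∉ J := by
    have : x ∈ (insert y C₁) \ J := hx ▸ Finset.mem_singleton_self x
    exact (Finset.mem_sdiff.1 this).2
  have hyJ : y ∈ J := hJ1 (Finset.mem_insert_self _ _)
  have hxy : x ≠ y := fun h => hxJ (h ▸ hyJ)
  have hxC1 : x ∈ C₁ := by
    rcases Finset.mem_insert.1 hxW with h | h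
    · exact absurd h hxy
    · exact h
  have hJeq : J = (insert y C₁).erase x := by
    apply Finset.eq_of_subset_of_card_le
    · intro b hb
      exact Finset.mem_erase.2 ⟨fun h => hxJ (h ▸ hb), hJW hb⟩
    · rw [Finset.card_erase_of_mem hxW]; omega
  have hJeq2 : J = insert y (C₁.erase x) := by
    rw [hJeq]
    ext b
    simp only [Finset.mem_erase, Finset.mem_insert]
    constructor
    · rintro ⟨hbx, hb | hb⟩
      · exact Or.inl hb
      · exact Or.inr ⟨hbx, hb⟩
    · rintro (rfl | ⟨hbx, hb⟩)
      · exact ⟨Ne.symm hxy, Or.inl rfl⟩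
      · exact ⟨hbx, Or.inr hb⟩
  have hxT : x ∉ T := fun h => hxJ (hJ1 (Finset.mem_insert_of_mem h))
  have hxlty : x < y := by
    rcases lt_trichotomy x y with h | h | h
    · exact h
    · exact absurd h hxy
    · exact absurd (Finset.mem_filter.2 ⟨hxC1, h⟩) hxT
  have hyA : y ∈ A \ C₁ := Finset.mem_sdiff.2 ⟨h2.1 hy2, hy1⟩
  have henvy := h1.2.2.1 x hxC1 y hyA hxlty
  rw [← hJeq2] at henvy
  have hJr : N.rank A ≤ N.rank J := by
    obtain ⟨_, _, h3⟩ := hJNI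
    omega
  omega

lemma good_unique {q : ℕ} {A C₁ C₂ : Finset β} (hq : ∀ B : Finset β, N.Indep B → B.card ≤ q)
    (h1 : N.Good q A C₁) (h2 : N.Good q A C₂) : C₁ = C₂ := by
  classical
  by_contra hne
  set D := (C₁ \ C₂) ∪ (C₂ \ C₁) with hD
  have hDne : D.Nonempty := by
    rw [Finset.nonempty_iff_ne_empty]
    intro hcon
    apply hne
    have e1 : C₁ \ C₂ = ∅ := Finset.union_eq_empty.1 hcon |>.1
    have e2 : C₂ \ C₁ = ∅ := Finset.union_eq_empty.1 hcon |>.2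
    exact Finset.Subset.antisymm (Finset.sdiff_eq_empty_iff_subset.1 e1)
      (Finset.sdiff_eq_empty_iff_subset.1 e2)
  set y := D.max' hDne with hy
  have hyD : y ∈ D := D.max'_mem hDne
  have hagree : ∀ z, y < z → (z ∈ C₁ ↔ z ∈ C₂) := by
    intro z hz
    by_contra hcon
    have hzD : z ∈ D := by
      simp only [hD, Finset.mem_union, Finset.mem_sdiff]
      tauto
    exact absurd (D.le_max' z hzD) (not_le.2 hz)
  rcases Finset.mem_union.1 hyD with h | h
  · rw [Finset.mem_sdiff] at h
    exact N.good_core hq h2 h1 h.1 h.2 (fun z hz => (hagree z hz).symm)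
  · rw [Finset.mem_sdiff] at h
    exact N.good_core hq h1 h2 h.1 h.2 hagree

end Choice
end FinMatroid

/-- For a matroid all of whose independent sets have cardinality at most `q`,
there is exactly one choice rule satisfying matroidal objectives, no justified
envy under rank, and non-wastefulness (the non-wasteful matroid choice rule). -/
theorem nonWastefulMatroid_characterization
    {α : Type*} [Fintype α] [LinearOrder α] (M : FinMatroid α) (q : ℕ)
    (hq : ∀ A : Finset α, M.Indep A → A.card ≤ q) :
    ∃! C : Finset α → Finset α,
      (∀ A : Finset α, C A ⊆ A) ∧
      -- (i) matroidal objectives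
      (∀ A A' : Finset α, A' ⊆ A → M.rank A' ≤ M.rank (C A)) ∧
      -- (ii) no justified envy under rank
      (∀ A : Finset α, ∀ x ∈ C A, ∀ y ∈ A \ C A,
        y > x → M.rank (insert y ((C A).erase x)) < M.rank (C A)) ∧
      -- (iii) non-wastefulness
      (∀ A : Finset α, (C A).card = min A.card q) := by
  classical
  choose C hC using fun A => M.exists_good q hq A
  refine ⟨C, ⟨fun A => (hC A).1, fun A A' h => (hC A).2.1 A' h,
    fun A => (hC A).2.2.1, fun A => (hC A).2.2.2⟩, ?_⟩
  intro D hD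
  funext A
  exact M.good_unique hq ⟨hD.1 A, fun A' h => hD.2.1 A A' h, hD.2.2.1 A, hD.2.2.2 A⟩ (hC A)
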